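/- Define σ₀(x) = ((θ − η)/η)^{q−1}·x^q, δ(x) = (θ/η)·x, and δσ∞(x) = (θ/η^q)·(θ − η)^{q−1}·x^q. Then the twisted polynomials satisfy (τ − σ₀(x)) ∘ (τ − δ(x)) = (τ − δσ∞(x)) ∘ (τ − x); concretely, for every z ∈ L: (z^q − δ(x)·z)^q − σ₀(x)·(z^q − δ(x)·z) = (z^q − x·z)^q − δσ∞(x)·(z^q − x·z). -/

import Mathlib

/-- The twisted-polynomial identity
`(τ - σ₀(x)) ∘ (τ - δ(x)) = (τ - δσ∞(x)) ∘ (τ - x)`, where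
`σ₀(x) = ((θ-η)/η)^{q-1}·x^q`, `δ(x) = (θ/η)·x`, `δσ∞(x) = (θ/η^q)·(θ-η)^{q-1}·x^q`,
stated concretely on every `z ∈ L`. -/
theorem twisted_polynomial_swap_identity
    (p q : ℕ) (hp : Nat.Prime p) (hq : ∃ e : ℕ, 0 < e ∧ q = p ^ e)
    (L : Type*) [Field L] [CharP L p]
    (θ η x : L) (hη : η ≠ 0) :
    ∀ z : L,
      (z ^ q - (θ / η) * x * z) ^ q
          - ((θ - η) / η) ^ (q - 1) * x ^ q * (z ^ q - (θ / η) * x * z)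
        = (z ^ q - x * z) ^ q
            - (θ / η ^ q) * (θ - η) ^ (q - 1) * x ^ q * (z ^ q - x * z) := by
  obtain ⟨e, he, rfl⟩ := hq
  haveI := Fact.mk hp
  intro z
  have hfrob : ∀ a b : L, (a - b) ^ p ^ e = a ^ p ^ e - b ^ p ^ e := fun a b =>
    sub_pow_char_pow a b e
  have hq1 : p ^ e - 1 + 1 = p ^ e := Nat.succ_pred_eq_of_pos (pow_pos hp.pos e)
  have hc : (θ - η) * (θ - η) ^ (p ^ e - 1) = θ ^ p ^ e - η ^ p ^ e := by
    rw [← pow_succ', hq1, hfrob]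
  have hηq1' : η * η ^ (p ^ e - 1) = η ^ p ^ e := by rw [← pow_succ', hq1]
  rw [hfrob, hfrob, div_pow]
  rw [← hηq1'] at hc ⊢
  have hA : η ^ (p ^ e - 1) ≠ 0 := pow_ne_zero _ hη
  simp only [mul_pow, div_pow, ← hηq1']
  field_simp
  linear_combination (z ^ p ^ e * x ^ p ^ e) * hc
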